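/- For real s > 1, the Dirichlet series of the number of square roots of zero, ∑_{n≥1} a(n)/n^s where a(n) = #{x ∈ Z/nZ : x^2 = 0}, equals ζ(2s-1)ζ(s)/ζ(2s). -/

import Mathlib

open Finset LSeries
open scoped LSeries.notation

private lemma aux_dvd_gcd_sq {n k : ℕ} (hn : n ≠ 0) (h : n ∣ k ^ 2) : n ∣ n.gcd k ^ 2 := by
  rcases eq_or_ne k 0 with rfl | hk
  · simpa [Nat.gcd_zero_right] using dvd_pow_self n two_ne_zero
  · have hg : n.gcd k ≠ 0 := fun h0 => hn (Nat.gcd_eq_zero_iff.mp h0).1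
    rw [← Nat.factorization_le_iff_dvd hn (pow_ne_zero 2 hg), Finsupp.le_def]
    intro p
    have h2 := (Nat.factorization_le_iff_dvd hn (pow_ne_zero 2 hk)).mpr h
    rw [Finsupp.le_def] at h2
    have h2p := h2 p
    rw [Nat.factorization_pow, Finsupp.smul_apply] at h2p ⊢
    rw [Nat.factorization_gcd hn hk, Finsupp.inf_apply]
    simp only [smul_eq_mul] at h2p ⊢
    omega

private lemma aux_dvd_sq_iff {n g : ℕ} (hn : n ≠ 0) (hg : g ∣ n) :
    n ∣ g ^ 2 ↔ (n / g) ^ 2 ∣ n := by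
  obtain ⟨h, rfl⟩ := hg
  have hg0 : g ≠ 0 := fun h0 => hn (by simp [h0])
  have hh0 : h ≠ 0 := fun h0 => hn (by simp [h0])
  rw [Nat.mul_div_cancel_left h (Nat.pos_of_ne_zero hg0)]
  constructor
  · intro hd
    rw [pow_two] at hd ⊢
    exact (mul_dvd_mul_iff_right hh0).mpr ((mul_dvd_mul_iff_left hg0).mp hd)
  · intro hd
    rw [pow_two] at hd ⊢
    exact (mul_dvd_mul_iff_left hg0).mpr ((mul_dvd_mul_iff_right hh0).mp hd)

private lemma aux_card_eq (n : ℕ) (hn : n ≠ 0) :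
    Nat.card {x : ZMod n // x ^ 2 = 0} =
      ∑ d ∈ n.divisors.filter (fun d => d ^ 2 ∣ n), d.totient := by
  haveI : NeZero n := ⟨hn⟩
  classical
  have h1 : Nat.card {x : ZMod n // x ^ 2 = 0}
      = ((range n).filter (fun k => n ∣ k ^ 2)).card := by
    have hft : Fintype.card {x : ZMod n // x ^ 2 = 0}
        = (univ.filter (fun x : ZMod n => x ^ 2 = 0)).card :=
      Fintype.card_subtype (fun x : ZMod n => x ^ 2 = 0)
    rw [Nat.card_eq_fintype_card, hft]
    apply Finset.card_bij (fun x _ => x.val)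
    · intro x hx
      simp only [mem_filter, mem_univ, true_and] at hx ⊢
      refine ⟨mem_range.mpr x.val_lt, ?_⟩
      have hc : ((x.val ^ 2 : ℕ) : ZMod n) = 0 := by
        push_cast
        rw [ZMod.natCast_val, ZMod.cast_id]
        exact hx
      exact (ZMod.natCast_eq_zero_iff _ _).mp hc
    · intro x _ y _ h
      exact ZMod.val_injective n h
    · intro k hk
      simp only [mem_filter, mem_range] at hk
      refine ⟨(k : ZMod n), mem_filter.mpr ⟨mem_univ _, ?_⟩, ZMod.val_cast_of_lt hk.1⟩
      rw [← Nat.cast_pow, ZMod.natCast_eq_zero_iff]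
      exact hk.2
  rw [h1]
  have hmap : ∀ k ∈ (range n).filter (fun k => n ∣ k ^ 2),
      n.gcd k ∈ n.divisors.filter (fun g => n ∣ g ^ 2) := by
    intro k hk
    simp only [mem_filter, mem_range] at hk
    exact mem_filter.mpr ⟨Nat.mem_divisors.mpr ⟨Nat.gcd_dvd_left n k, hn⟩,
      aux_dvd_gcd_sq hn hk.2⟩
  rw [Finset.card_eq_sum_card_fiberwise hmap]
  have hfib : ∀ g ∈ n.divisors.filter (fun g => n ∣ g ^ 2),
      (((range n).filter (fun k => n ∣ k ^ 2)).filter (fun k => n.gcd k = g)).card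
        = (n / g).totient := by
    intro g hg
    simp only [mem_filter, Nat.mem_divisors] at hg
    rw [Nat.totient_div_of_dvd hg.1.1]
    congr 1
    ext k
    simp only [mem_filter, mem_range]
    constructor
    · rintro ⟨⟨hk, -⟩, hgcd⟩
      exact ⟨hk, hgcd⟩
    · rintro ⟨hk, hgcd⟩
      refine ⟨⟨hk, ?_⟩, hgcd⟩
      have hgk : g ∣ k := hgcd ▸ Nat.gcd_dvd_right n k
      exact dvd_trans hg.2 (pow_dvd_pow_of_dvd hgk 2)
  rw [Finset.sum_congr rfl hfib]
  rw [Finset.sum_filter]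
  have hcong : ∀ g ∈ n.divisors,
      (if n ∣ g ^ 2 then (n / g).totient else 0)
        = (fun d => if d ^ 2 ∣ n then d.totient else 0) (n / g) := by
    intro g hg
    simp only [aux_dvd_sq_iff hn (Nat.dvd_of_mem_divisors hg)]
  rw [Finset.sum_congr rfl hcong, Nat.sum_div_divisors n (fun d => if d ^ 2 ∣ n then d.totient else 0),
    ← Finset.sum_filter]

noncomputable def sqTotient : ℕ → ℂ :=
  fun m => if m.sqrt ^ 2 = m then ((m.sqrt).totient : ℂ) else 0

private lemma aux_conv (n : ℕ) (hn : n ≠ 0) :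
    ((Nat.card {x : ZMod n // x ^ 2 = 0} : ℂ)) = (sqTotient ⍟ (1 : ℕ → ℂ)) n := by
  classical
  rw [aux_card_eq n hn, convolution_def]
  simp only [Pi.one_apply, mul_one]
  rw [Nat.sum_divisorsAntidiagonal (f := fun i j => sqTotient i)]
  push_cast
  have hstep : (∑ d ∈ n.divisors, sqTotient d)
      = ∑ d ∈ n.divisors.filter (fun d => d.sqrt ^ 2 = d), ((d.sqrt).totient : ℂ) := by
    rw [Finset.sum_filter]
    exact Finset.sum_congr rfl fun d _ => rfl
  rw [hstep]
  refine Finset.sum_nbij' (fun e => e ^ 2) (fun d => d.sqrt) ?_ ?_ ?_ ?_ ?_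
  · intro e he
    simp only [mem_filter, Nat.mem_divisors] at he ⊢
    exact ⟨⟨he.2, hn⟩, by rw [Nat.sqrt_eq']⟩
  · intro d hd
    simp only [mem_filter, Nat.mem_divisors] at hd ⊢
    have h2 : d.sqrt ^ 2 ∣ n := by rw [hd.2]; exact hd.1.1
    exact ⟨⟨dvd_trans (dvd_pow_self d.sqrt two_ne_zero) h2, hn⟩, h2⟩
  · intro e _
    exact Nat.sqrt_eq' e
  · intro d hd
    simp only [mem_filter] at hd
    exact hd.2
  · intro e _
    rw [Nat.sqrt_eq']

theorem squareRootsOfZero_dirichletSeries (s : ℝ) (hs : 3 / 2 < s) :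
    (∑' n : ℕ, (Nat.card {x : ZMod n // x ^ 2 = 0} : ℂ) / (n : ℂ) ^ (s : ℂ)) =
      riemannZeta (2 * s - 1) * riemannZeta s / riemannZeta (2 * s) := by
  have hs1 : (1 : ℝ) < s := lt_trans (by norm_num) hs
  have hS0 : (s : ℂ) ≠ 0 := by
    exact_mod_cast ne_of_gt (lt_trans one_pos hs1)
  have hre : (s : ℂ).re = s := Complex.ofReal_re s
  have hre2 : ((2 : ℂ) * s).re = 2 * s := by
    rw [show (2 : ℂ) * s = ((2 * s : ℝ) : ℂ) by push_cast; ring, Complex.ofReal_re]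
  -- summability facts
  have hfsum : LSeriesSummable sqTotient s := by
    refine LSeriesSummable_of_le_const_mul_rpow (x := 3 / 2) (by rw [hre]; exact hs) ⟨1, ?_⟩
    intro n hn
    rw [one_mul]
    unfold sqTotient
    split_ifs with h
    · have : ((n.sqrt : ℝ)) ≤ (n : ℝ) ^ ((3 : ℝ) / 2 - 1) := by
        rw [show (3 : ℝ) / 2 - 1 = 1 / 2 by norm_num, ← Real.sqrt_eq_rpow,
          show ((n : ℝ)) = (n.sqrt : ℝ) ^ 2 by exact_mod_cast congrArg Nat.cast h.symm]
        rw [Real.sqrt_sq (by positivity)]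
      calc ‖((n.sqrt).totient : ℂ)‖ = ((n.sqrt).totient : ℝ) := by
            rw [Complex.norm_natCast]
      _ ≤ (n.sqrt : ℝ) := by exact_mod_cast Nat.totient_le _
      _ ≤ _ := this
    · simp only [norm_zero]
      positivity
  have h1sum : LSeriesSummable 1 (s : ℂ) :=
    LSeriesSummable_one_iff.mpr (by rw [hre]; exact hs1)
  have htotsum : LSeriesSummable (fun d => ((d.totient : ℂ))) (2 * s) := by
    refine LSeriesSummable_of_le_const_mul_rpow (x := 2) (by rw [hre2]; linarith) ⟨1, ?_⟩
    intro n hn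
    rw [one_mul, show (2 : ℝ) - 1 = 1 by norm_num, Real.rpow_one, Complex.norm_natCast]
    exact_mod_cast Nat.totient_le n
  have h1sum2 : LSeriesSummable 1 ((2 : ℂ) * s) :=
    LSeriesSummable_one_iff.mpr (by rw [hre2]; linarith)
  -- LHS as LSeries
  have hLHS : (∑' n : ℕ, (Nat.card {x : ZMod n // x ^ 2 = 0} : ℂ) / (n : ℂ) ^ (s : ℂ))
      = LSeries (fun n => (Nat.card {x : ZMod n // x ^ 2 = 0} : ℂ)) s :=
    (tsum_congr fun n =>
      (LSeries.term_of_ne_zero' hS0 (fun n => (Nat.card {x : ZMod n // x ^ 2 = 0} : ℂ)) n)).symm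
  rw [hLHS, LSeries_congr (fun {n} hn => aux_conv n hn) (s : ℂ),
    LSeries_convolution' hfsum h1sum,
    LSeries_one_eq_riemannZeta (by rw [hre]; exact hs1)]
  -- LSeries sqTotient s = LSeries totient (2s)
  have hsq : LSeries sqTotient (s : ℂ) = LSeries (fun d => ((d.totient : ℂ))) (2 * s) := by
    have hinj : Function.Injective (fun d : ℕ => d ^ 2) :=
      fun a b h => Nat.pow_left_injective (by norm_num) h
    have hsupp : Function.support (LSeries.term sqTotient (s : ℂ)) ⊆
        Set.range (fun d : ℕ => d ^ 2) := by
      intro m hm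
      rcases eq_or_ne m 0 with rfl | hm0
      · simp at hm
      · rw [Function.mem_support, LSeries.term_of_ne_zero hm0] at hm
        have hf : sqTotient m ≠ 0 := fun h0 => hm (by rw [h0, zero_div])
        unfold sqTotient at hf
        by_cases hsqm : m.sqrt ^ 2 = m
        · exact ⟨m.sqrt, hsqm⟩
        · simp [hsqm] at hf
    have hterm : ∀ d : ℕ, LSeries.term sqTotient (s : ℂ) (d ^ 2)
        = LSeries.term (fun d => ((d.totient : ℂ))) ((2 : ℂ) * s) d := by
      intro d
      rcases eq_or_ne d 0 with rfl | hd0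
      · simp
      · have hd2 : d ^ 2 ≠ 0 := pow_ne_zero 2 hd0
        rw [LSeries.term_of_ne_zero hd2, LSeries.term_of_ne_zero hd0]
        have hfd : sqTotient (d ^ 2) = ((d.totient : ℂ)) := by
          unfold sqTotient
          rw [Nat.sqrt_eq' d, if_pos rfl]
        rw [hfd]
        congr 1
        have hdC : ((d : ℂ)) ≠ 0 := Nat.cast_ne_zero.mpr hd0
        rw [two_mul, Complex.cpow_add _ _ hdC]
        push_cast
        rw [pow_two, show ((d : ℂ)) = ((d : ℝ) : ℂ) by push_cast; rfl,
          ← Complex.mul_cpow_ofReal_nonneg (Nat.cast_nonneg d) (Nat.cast_nonneg d)]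
    calc LSeries sqTotient (s : ℂ)
        = ∑' d : ℕ, LSeries.term sqTotient (s : ℂ) (d ^ 2) :=
          (Function.Injective.tsum_eq hinj hsupp).symm
      _ = ∑' d : ℕ, LSeries.term (fun d => ((d.totient : ℂ))) ((2 : ℂ) * s) d :=
          tsum_congr hterm
      _ = LSeries (fun d => ((d.totient : ℂ))) (2 * s) := rfl
  rw [hsq]
  -- LSeries totient (2s) = ζ(2s-1)/ζ(2s)
  have hz2 : riemannZeta ((2 : ℂ) * s) ≠ 0 :=
    riemannZeta_ne_zero_of_one_lt_re (by rw [hre2]; linarith)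
  have hid : LSeries (fun n => ((n : ℂ))) ((2 : ℂ) * s) = riemannZeta (2 * s - 1) := by
    have hre3 : ((2 : ℂ) * s - 1).re = 2 * s - 1 := by
      rw [show (2 : ℂ) * s - 1 = ((2 * s - 1 : ℝ) : ℂ) by push_cast; ring, Complex.ofReal_re]
    rw [← LSeries_one_eq_riemannZeta (by rw [hre3]; linarith)]
    unfold LSeries
    refine tsum_congr fun n => ?_
    rcases eq_or_ne n 0 with rfl | hn0
    · simp
    · rw [LSeries.term_of_ne_zero hn0, LSeries.term_of_ne_zero hn0]
      have hnC : ((n : ℂ)) ≠ 0 := Nat.cast_ne_zero.mpr hn0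
      have hnz : ((n : ℂ)) ^ ((2 : ℂ) * s - 1) ≠ 0 := by
        intro h0
        exact hnC ((Complex.cpow_eq_zero_iff _ _).mp h0).1
      rw [show (2 : ℂ) * s = ((2 : ℂ) * s - 1) + 1 by ring, Complex.cpow_add _ _ hnC,
        Complex.cpow_one]
      simp only [Pi.one_apply]
      field_simp
      simp [hnz]
  have hconv2 : LSeries (fun d => ((d.totient : ℂ))) ((2 : ℂ) * s) * riemannZeta ((2 : ℂ) * s)
      = riemannZeta (2 * s - 1) := by
    rw [← LSeries_one_eq_riemannZeta (by rw [hre2]; linarith),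
      ← LSeries_convolution' htotsum h1sum2, ← hid]
    refine LSeries_congr (fun {n} hn => ?_) _
    rw [convolution_def]
    simp only [Pi.one_apply, mul_one]
    rw [Nat.sum_divisorsAntidiagonal (f := fun i j => ((i.totient : ℂ))), ← Nat.cast_sum,
      Nat.sum_totient]
  have htot : LSeries (fun d => ((d.totient : ℂ))) ((2 : ℂ) * s)
      = riemannZeta (2 * s - 1) / riemannZeta (2 * s) := by
    rw [eq_div_iff hz2]
    exact hconv2
  rw [htot]
  ring
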